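/- Let α ∈ (0,1), δ > 0, ρ ∈ ℝ, and take the cost c(u,w) = ‖u − w‖₂ (κ = 1). Then the optimal value of the robust mean-CVaR problem, inf over (π, a) ∈ ℝⁿ × ℝ with inf_{P ∈ U_δ(Q)} E_P[⟪π, R⟫] ≥ ρ and ⟪π, 𝟏⟫ = 1, of sup over P ∈ U_δ(Q) of { a + (1/α) E_P[ max(−⟪π, R⟫ − a, 0) ] }, equals the optimal value of the finite-dimensional problem: inf over (π, a) with (1/N) Σ_{i=1}^N ⟪π, Rᵢ⟫ − δ‖π‖₂ ≥ ρ and ⟪π, 𝟏⟫ = 1, of a + (1/α) ( (1/N) Σ_{i=1}^N max(−⟪π, Rᵢ⟫ − a, 0) + δ‖π‖₂ ). -/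

import Mathlib

open MeasureTheory
open scoped ENNReal RealInnerProductSpace BigOperators

noncomputable def transportCost {n : ℕ}
    (c : EuclideanSpace ℝ (Fin n) → EuclideanSpace ℝ (Fin n) → ℝ≥0∞)
    (μ ν : Measure (EuclideanSpace ℝ (Fin n))) : ℝ≥0∞ :=
  ⨅ (γ : Measure (EuclideanSpace ℝ (Fin n) × EuclideanSpace ℝ (Fin n)))
    (_ : γ.map Prod.fst = μ) (_ : γ.map Prod.snd = ν),
    ∫⁻ p, c p.1 p.2 ∂γ

noncomputable def empirical {n N : ℕ} (R : Fin N → EuclideanSpace ℝ (Fin n)) :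
    Measure (EuclideanSpace ℝ (Fin n)) :=
  (N : ℝ≥0∞)⁻¹ • ∑ i, Measure.dirac (R i)

section Aux
variable {n N : ℕ}
local notation "E" => EuclideanSpace ℝ (Fin n)

-- map of a finset sum of measures
lemma measure_map_finsetSum {ι : Type*} {α β : Type*} [MeasurableSpace α] [MeasurableSpace β]
    {f : α → β} (hf : Measurable f) (s : Finset ι) (μ : ι → Measure α) :
    (∑ i ∈ s, μ i).map f = ∑ i ∈ s, (μ i).map f := by
  simp_rw [← Measure.mapₗ_apply_of_measurable hf]
  exact map_sum (Measure.mapₗ f) μ s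

lemma lintegral_empirical (R : Fin N → E) (f : E → ℝ≥0∞) :
    ∫⁻ x, f x ∂(empirical R) = (N:ℝ≥0∞)⁻¹ * ∑ i, f (R i) := by
  rw [empirical, lintegral_smul_measure, lintegral_finset_sum_measure]
  simp [lintegral_dirac]

lemma integrable_dirac'' {f : E → ℝ} (hf : Continuous f) (x : E) :
    Integrable f (Measure.dirac x) := by
  refine ⟨hf.aestronglyMeasurable, ?_⟩
  simp [HasFiniteIntegral, lintegral_dirac]

lemma integrable_empirical (hN : 0 < N) {f : E → ℝ} (hf : Continuous f) (R : Fin N → E) :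
    Integrable f (empirical R) := by
  rw [empirical]
  refine (integrable_finset_sum_measure.2 fun i _ => integrable_dirac'' hf (R i)).smul_measure ?_
  simp [hN.ne']

lemma integral_empirical (R : Fin N → E) {f : E → ℝ} (hf : Continuous f) :
    ∫ x, f x ∂(empirical R) = (N:ℝ)⁻¹ * ∑ i, f (R i) := by
  rw [empirical, integral_smul_measure,
    integral_finset_sum_measure (fun i _ => integrable_dirac'' hf (R i))]
  simp [integral_dirac, ENNReal.toReal_inv]

lemma empirical_isProb (hN : 0 < N) (R : Fin N → E) : IsProbabilityMeasure (empirical R) := by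
  constructor
  rw [empirical]
  simp [Measure.smul_apply, Measure.finset_sum_apply, smul_eq_mul]
  rw [ENNReal.inv_mul_cancel] <;> simp [hN.ne']

end Aux

section TC
variable {n : ℕ}
local notation "E" => EuclideanSpace ℝ (Fin n)

lemma transportCost_le_coupling {c : E → E → ℝ≥0∞} {P Q : Measure E}
    {γ : Measure (E × E)} (h1 : γ.map Prod.fst = P) (h2 : γ.map Prod.snd = Q) :
    transportCost c P Q ≤ ∫⁻ p, c p.1 p.2 ∂γ := by
  refine iInf_le_of_le γ ?_
  rw [iInf_pos h1, iInf_pos h2]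

lemma exists_coupling {c : E → E → ℝ≥0∞} {P Q : Measure E} {D : ℝ≥0∞}
    (h : transportCost c P Q ≤ D) (hD : D ≠ ⊤) {η : ℝ≥0∞} (hη : 0 < η) (hη' : η ≠ ⊤) :
    ∃ γ : Measure (E × E), γ.map Prod.fst = P ∧ γ.map Prod.snd = Q ∧
      ∫⁻ p, c p.1 p.2 ∂γ ≤ D + η := by
  have hlt : transportCost c P Q < D + η :=
    lt_of_le_of_lt h (ENNReal.lt_add_right hD hη.ne')
  rw [transportCost, iInf_lt_iff] at hlt
  obtain ⟨γ, hγ⟩ := hlt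
  have htop : D + η ≠ ⊤ := ENNReal.add_ne_top.2 ⟨hD, hη'⟩
  by_cases h1 : γ.map Prod.fst = P
  · by_cases h2 : γ.map Prod.snd = Q
    · rw [iInf_pos h1, iInf_pos h2] at hγ
      exact ⟨γ, h1, h2, hγ.le⟩
    · rw [iInf_pos h1, iInf_neg h2] at hγ
      exact absurd hγ (by simp [htop.lt_top.not_gt])
  · rw [iInf_neg h1] at hγ
    exact absurd hγ (by simp [htop.lt_top.not_gt])

lemma coupling_prob {P : Measure E} [IsProbabilityMeasure P]
    {γ : Measure (E × E)} (h1 : γ.map Prod.fst = P) :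
    IsProbabilityMeasure γ := by
  constructor
  have := congrArg (fun μ : Measure E => μ Set.univ) h1
  simp only [Measure.map_apply measurable_fst MeasurableSet.univ, Set.preimage_univ] at this
  rw [this]
  exact measure_univ

/-- upper bound on a lintegral over any element of the ball, for `f` with
`f x ≤ f y + K ‖x - y‖`. -/
lemma lintegral_le_of_coupling {f : E → ℝ} (hfc : Continuous f) {K : ℝ} (hK : 0 ≤ K)
    (hlip : ∀ x y, f x ≤ f y + K * ‖x - y‖)
    {γ : Measure (E × E)} {P Q : Measure E} (h1 : γ.map Prod.fst = P) (h2 : γ.map Prod.snd = Q) :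
    ∫⁻ x, ENNReal.ofReal (f x) ∂P ≤ ∫⁻ x, ENNReal.ofReal (f x) ∂Q
      + ENNReal.ofReal K * ∫⁻ p, ENNReal.ofReal ‖p.1 - p.2‖ ∂γ := by
  have hm : Measurable fun x : E => ENNReal.ofReal (f x) :=
    ENNReal.measurable_ofReal.comp hfc.measurable
  rw [← h1, ← h2, lintegral_map hm measurable_fst, lintegral_map hm measurable_snd]
  rw [← lintegral_const_mul _ (show Measurable fun p : E × E => ENNReal.ofReal ‖p.1 - p.2‖ from
    ENNReal.measurable_ofReal.comp ((continuous_fst.sub continuous_snd).norm).measurable),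
    ← lintegral_add_left (show Measurable fun p : E × E => ENNReal.ofReal (f p.2) from
      hm.comp measurable_snd)]
  refine lintegral_mono fun p => ?_
  calc ENNReal.ofReal (f p.1) ≤ ENNReal.ofReal (f p.2 + K * ‖p.1 - p.2‖) :=
        ENNReal.ofReal_le_ofReal (hlip p.1 p.2)
    _ ≤ ENNReal.ofReal (f p.2) + ENNReal.ofReal (K * ‖p.1 - p.2‖) := ENNReal.ofReal_add_le
    _ = ENNReal.ofReal (f p.2) + ENNReal.ofReal K * ENNReal.ofReal ‖p.1 - p.2‖ := by
        rw [ENNReal.ofReal_mul hK]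

end TC

lemma le_of_forall_pos_sub {a b c : ℝ} (hc : 0 ≤ c)
    (h : ∀ η : ℝ, 0 < η → a - c * η ≤ b) : a ≤ b := by
  by_contra hab
  push_neg at hab
  rcases eq_or_lt_of_le hc with hc0 | hc0
  · have := h 1 one_pos
    rw [← hc0] at this
    linarith
  · have h2 := h ((a - b) / (2 * c)) (div_pos (by linarith) (by linarith))
    have hne : c * ((a - b) / (2 * c)) = (a - b) / 2 := by
      field_simp
    rw [hne] at h2
    linarith

section Bochner
variable {n : ℕ}
local notation "E" => EuclideanSpace ℝ (Fin n)

lemma integral_inner_ge_of_coupling (π : E) {γ : Measure (E × E)} {P Q : Measure E}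
    [IsProbabilityMeasure P]
    (h1 : γ.map Prod.fst = P) (h2 : γ.map Prod.snd = Q)
    (hQint : Integrable (fun x : E => ⟪π, x⟫) Q)
    {C : ℝ} (hC : 0 ≤ C)
    (hcost : ∫⁻ p, ENNReal.ofReal ‖p.1 - p.2‖ ∂γ ≤ ENNReal.ofReal C) :
    Integrable (fun x : E => ⟪π, x⟫) P ∧
      (∫ x, ⟪π, x⟫ ∂Q) - ‖π‖ * C ≤ ∫ x, ⟪π, x⟫ ∂P := by
  haveI : IsProbabilityMeasure γ := coupling_prob h1
  set g : E → ℝ := fun x => ⟪π, x⟫ with hg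
  have hgc : Continuous g := continuous_const.inner continuous_id
  have hnormc : Continuous fun p : E × E => ‖p.1 - p.2‖ :=
    (continuous_fst.sub continuous_snd).norm
  have hcostInt : Integrable (fun p : E × E => ‖p.1 - p.2‖) γ := by
    refine ⟨hnormc.aestronglyMeasurable, ?_⟩
    simp only [HasFiniteIntegral]
    calc ∫⁻ p, (‖‖p.1 - p.2‖‖₊ : ℝ≥0∞) ∂γ = ∫⁻ p, ENNReal.ofReal ‖p.1 - p.2‖ ∂γ := by
          refine lintegral_congr fun p => ?_
          exact Real.enorm_eq_ofReal (norm_nonneg _)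
      _ ≤ ENNReal.ofReal C := hcost
      _ < ⊤ := ENNReal.ofReal_lt_top
  have hsnd : Integrable (fun p : E × E => g p.2) γ := by
    have := (integrable_map_measure (h2 ▸ hgc.aestronglyMeasurable)
      measurable_snd.aemeasurable).1 (h2 ▸ hQint)
    exact this
  have hbound : ∀ p : E × E, |g p.1| ≤ ‖g p.2‖ + ‖π‖ * ‖p.1 - p.2‖ := by
    intro p
    have h3 : |g p.1 - g p.2| = |⟪π, p.1 - p.2⟫| := by
      rw [hg]
      simp [inner_sub_right]
    have h4 : |⟪π, p.1 - p.2⟫| ≤ ‖π‖ * ‖p.1 - p.2‖ := abs_real_inner_le_norm _ _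
    have h5 : |g p.1| - |g p.2| ≤ |g p.1 - g p.2| := abs_sub_abs_le_abs_sub _ _
    rw [Real.norm_eq_abs]
    linarith [h3 ▸ h4]
  have hfst : Integrable (fun p : E × E => g p.1) γ := by
    refine Integrable.mono' (hsnd.norm.add (hcostInt.const_mul ‖π‖))
      (hgc.comp continuous_fst).aestronglyMeasurable ?_
    exact Filter.Eventually.of_forall fun p => by
      rw [Real.norm_eq_abs]; exact hbound p
  have hPint : Integrable g P := by
    rw [← h1]
    exact (integrable_map_measure (h1 ▸ hgc.aestronglyMeasurable)
      measurable_fst.aemeasurable).2 hfst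
  refine ⟨hPint, ?_⟩
  have hiP : ∫ x, g x ∂P = ∫ p, g p.1 ∂γ := by
    rw [← h1, integral_map measurable_fst.aemeasurable (h1 ▸ hgc.aestronglyMeasurable)]
  have hiQ : ∫ x, g x ∂Q = ∫ p, g p.2 ∂γ := by
    rw [← h2, integral_map measurable_snd.aemeasurable (h2 ▸ hgc.aestronglyMeasurable)]
  have hmono : ∫ p, (g p.2 - g p.1) ∂γ ≤ ∫ p, ‖π‖ * ‖p.1 - p.2‖ ∂γ := by
    refine integral_mono (hsnd.sub hfst) (hcostInt.const_mul ‖π‖) fun p => ?_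
    have : g p.2 - g p.1 = ⟪π, p.2 - p.1⟫ := by simp [hg, inner_sub_right]
    rw [this]
    calc ⟪π, p.2 - p.1⟫ ≤ ‖π‖ * ‖p.2 - p.1‖ := real_inner_le_norm _ _
      _ = ‖π‖ * ‖p.1 - p.2‖ := by rw [norm_sub_rev]
  have hcostR : ∫ p, ‖p.1 - p.2‖ ∂γ ≤ C := by
    rw [integral_eq_lintegral_of_nonneg_ae (Filter.Eventually.of_forall fun p => norm_nonneg _)
      hnormc.aestronglyMeasurable]
    exact ENNReal.toReal_le_of_le_ofReal hC hcost
  rw [integral_sub hsnd hfst, integral_const_mul] at hmono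
  rw [hiP, hiQ]
  nlinarith [norm_nonneg π]

variable {N : ℕ}

/-- A perturbation of the empirical measure: move mass `ε` from `R i₀` to `v`. -/
noncomputable def pert (R : Fin N → E) (i₀ : Fin N) (v : E) (ε : ℝ) : Measure E :=
  ENNReal.ofReal ε • Measure.dirac v
    + ((N : ℝ≥0∞)⁻¹ - ENNReal.ofReal ε) • Measure.dirac (R i₀)
    + ∑ i ∈ Finset.univ.erase i₀, (N : ℝ≥0∞)⁻¹ • Measure.dirac (R i)

lemma ofReal_le_invN (hN : 0 < N) {ε : ℝ} (hεN : ε ≤ (N:ℝ)⁻¹) :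
    ENNReal.ofReal ε ≤ (N : ℝ≥0∞)⁻¹ := by
  calc ENNReal.ofReal ε ≤ ENNReal.ofReal (N:ℝ)⁻¹ := ENNReal.ofReal_le_ofReal hεN
    _ = (N : ℝ≥0∞)⁻¹ := by
      rw [ENNReal.ofReal_inv_of_pos (by exact_mod_cast hN), ENNReal.ofReal_natCast]

lemma pert_lintegral (R : Fin N → E) (i₀ : Fin N) (v : E) (ε : ℝ) (g : E → ℝ≥0∞) :
    ∫⁻ x, g x ∂(pert R i₀ v ε) = ENNReal.ofReal ε * g v
      + ((N : ℝ≥0∞)⁻¹ - ENNReal.ofReal ε) * g (R i₀)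
      + (N : ℝ≥0∞)⁻¹ * ∑ i ∈ Finset.univ.erase i₀, g (R i) := by
  rw [pert, lintegral_add_measure, lintegral_add_measure, lintegral_smul_measure,
    lintegral_smul_measure, lintegral_finset_sum_measure]
  simp [lintegral_dirac, Finset.mul_sum]

lemma pert_isProb (hN : 0 < N) (R : Fin N → E) (i₀ : Fin N) (v : E) {ε : ℝ}
    (hεN : ε ≤ (N:ℝ)⁻¹) : IsProbabilityMeasure (pert R i₀ v ε) := by
  constructor
  have h := pert_lintegral R i₀ v ε (fun _ => 1)
  rw [lintegral_one] at h
  rw [h]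
  simp only [mul_one, Finset.sum_const, Finset.card_erase_of_mem (Finset.mem_univ i₀),
    Finset.card_univ, Fintype.card_fin, nsmul_eq_mul]
  rw [add_tsub_cancel_of_le (ofReal_le_invN hN hεN)]
  have hr : (N:ℝ≥0∞)⁻¹ + (N:ℝ≥0∞)⁻¹ * ((N - 1 : ℕ) : ℝ≥0∞)
      = (N:ℝ≥0∞)⁻¹ * ((1 : ℝ≥0∞) + ((N - 1 : ℕ) : ℝ≥0∞)) := by ring
  have hc : (1 : ℝ≥0∞) + ((N - 1 : ℕ) : ℝ≥0∞) = (N : ℝ≥0∞) := by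
    rw [← Nat.cast_one (R := ℝ≥0∞), ← Nat.cast_add]
    norm_cast
    omega
  rw [hr, hc, ENNReal.inv_mul_cancel (by exact_mod_cast hN.ne') (by simp)]

lemma pert_transportCost (hN : 0 < N) (R : Fin N → E) (i₀ : Fin N) (v : E) {ε δ : ℝ}
    (hε0 : 0 ≤ ε) (hεN : ε ≤ (N:ℝ)⁻¹) (hd : ε * ‖v - R i₀‖ ≤ δ) :
    transportCost (fun u w => ENNReal.ofReal ‖u - w‖) (pert R i₀ v ε) (empirical R)
      ≤ ENNReal.ofReal δ := by
  set γ : Measure (E × E) := ENNReal.ofReal ε • Measure.dirac (v, R i₀)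
    + ((N : ℝ≥0∞)⁻¹ - ENNReal.ofReal ε) • Measure.dirac (R i₀, R i₀)
    + ∑ i ∈ Finset.univ.erase i₀, (N : ℝ≥0∞)⁻¹ • Measure.dirac (R i, R i) with hγ
  have h1 : γ.map Prod.fst = pert R i₀ v ε := by
    rw [hγ, Measure.map_add _ _ measurable_fst, Measure.map_add _ _ measurable_fst,
      Measure.map_smul, Measure.map_smul, measure_map_finsetSum measurable_fst]
    simp only [Measure.map_smul, Measure.map_dirac' measurable_fst]
    rfl
  have h2 : γ.map Prod.snd = empirical R := by
    rw [hγ, Measure.map_add _ _ measurable_snd, Measure.map_add _ _ measurable_snd,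
      Measure.map_smul, Measure.map_smul, measure_map_finsetSum measurable_snd]
    simp only [Measure.map_smul, Measure.map_dirac' measurable_snd]
    rw [← add_smul, add_tsub_cancel_of_le (ofReal_le_invN hN hεN)]
    rw [empirical, Finset.smul_sum]
    exact Finset.add_sum_erase _ (fun i => (N : ℝ≥0∞)⁻¹ • Measure.dirac (R i))
      (Finset.mem_univ i₀)
  refine le_trans (transportCost_le_coupling h1 h2) ?_
  rw [hγ, lintegral_add_measure, lintegral_add_measure, lintegral_smul_measure,
    lintegral_smul_measure, lintegral_finset_sum_measure]
  simp only [lintegral_smul_measure, lintegral_dirac, sub_self, norm_zero,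
    ENNReal.ofReal_zero, smul_eq_mul, mul_zero, add_zero, Finset.sum_const_zero]
  rw [← ENNReal.ofReal_mul hε0]
  exact ENNReal.ofReal_le_ofReal hd

lemma pert_integrable {f : E → ℝ} (hf : Continuous f) (hN : 0 < N) (R : Fin N → E)
    (i₀ : Fin N) (v : E) (ε : ℝ) : Integrable f (pert R i₀ v ε) := by
  rw [pert]
  refine Integrable.add_measure (Integrable.add_measure ?_ ?_) ?_
  · exact (integrable_dirac'' hf v).smul_measure ENNReal.ofReal_ne_top
  · refine (integrable_dirac'' hf (R i₀)).smul_measure ?_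
    exact ne_top_of_le_ne_top (by simp [hN.ne']) tsub_le_self
  · exact integrable_finset_sum_measure.2 fun i _ =>
      (integrable_dirac'' hf (R i)).smul_measure (by simp [hN.ne'])

lemma pert_integral (hN : 0 < N) (R : Fin N → E) (i₀ : Fin N) (v : E) {ε : ℝ}
    (hε0 : 0 ≤ ε) (hεN : ε ≤ (N:ℝ)⁻¹) {f : E → ℝ} (hf : Continuous f) :
    ∫ x, f x ∂(pert R i₀ v ε)
      = (N:ℝ)⁻¹ * ∑ i, f (R i) + ε * (f v - f (R i₀)) := by
  rw [pert, integral_add_measure (Integrable.add_measure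
      ((integrable_dirac'' hf v).smul_measure ENNReal.ofReal_ne_top)
      ((integrable_dirac'' hf (R i₀)).smul_measure
        (ne_top_of_le_ne_top (by simp [hN.ne']) tsub_le_self)))
      (integrable_finset_sum_measure.2 fun i _ =>
        (integrable_dirac'' hf (R i)).smul_measure (by simp [hN.ne'])),
    integral_add_measure ((integrable_dirac'' hf v).smul_measure ENNReal.ofReal_ne_top)
      ((integrable_dirac'' hf (R i₀)).smul_measure
        (ne_top_of_le_ne_top (by simp [hN.ne']) tsub_le_self)),
    integral_finset_sum_measure (fun i _ =>
      (integrable_dirac'' hf (R i)).smul_measure (by simp [hN.ne']))]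
  simp only [integral_smul_measure, integral_dirac, smul_eq_mul]
  have ht : (ENNReal.ofReal ε).toReal = ε := ENNReal.toReal_ofReal hε0
  have hNinv : ((N : ℝ≥0∞)⁻¹).toReal = (N:ℝ)⁻¹ := by
    rw [ENNReal.toReal_inv, ENNReal.toReal_natCast]
  have hsub : ((N : ℝ≥0∞)⁻¹ - ENNReal.ofReal ε).toReal = (N:ℝ)⁻¹ - ε := by
    rw [ENNReal.toReal_sub_of_le (ofReal_le_invN hN hεN) (by simp [hN.ne']), ht, hNinv]
  rw [ht, hsub, hNinv]
  rw [← Finset.sum_erase_add _ _ (Finset.mem_univ i₀), mul_add, Finset.mul_sum]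
  ring

/-- value of the robust expectation over the Wasserstein ball. -/
lemma lemA (hN : 0 < N) (R : Fin N → E) {δ : ℝ} (hδ : 0 < δ) {π : E} (hπ : π ≠ 0) :
    ⨅ P ∈ {P : Measure E | IsProbabilityMeasure P ∧
        transportCost (fun u w => ENNReal.ofReal ‖u - w‖) P (empirical R)
          ≤ ENNReal.ofReal δ},
      ((∫ x, ⟪π, x⟫ ∂P : ℝ) : EReal)
    = (((N : ℝ)⁻¹ * ∑ i, ⟪π, R i⟫ - δ * ‖π‖ : ℝ) : EReal) := by
  have hπ0 : (0:ℝ) < ‖π‖ := norm_pos_iff.2 hπ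
  have hinner : Continuous fun x : E => ⟪π, x⟫ := continuous_const.inner continuous_id
  have hQint : Integrable (fun x : E => ⟪π, x⟫) (empirical R) := integrable_empirical hN hinner R
  have hQval : ∫ x, ⟪π, x⟫ ∂(empirical R) = (N:ℝ)⁻¹ * ∑ i, ⟪π, R i⟫ :=
    integral_empirical R hinner
  set m : ℝ := (N:ℝ)⁻¹ * ∑ i, ⟪π, R i⟫ with hm
  apply le_antisymm
  · -- construct the minimizer
    set i₀ : Fin N := ⟨0, hN⟩
    set s : ℝ := N * δ + 1 with hs
    have hspos : 0 < s := by positivity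
    set ε : ℝ := δ / s with hε
    have hε0 : 0 < ε := div_pos hδ hspos
    have hεN : ε ≤ (N:ℝ)⁻¹ := by
      rw [hε, div_le_iff₀ hspos] at *
      rw [hs]
      have hNpos : (0:ℝ) < N := by exact_mod_cast hN
      rw [inv_mul_eq_div, le_div_iff₀ hNpos]
      nlinarith
    set e : E := ‖π‖⁻¹ • π with he
    have hene : ‖e‖ = 1 := by
      rw [he, norm_smul, norm_inv, norm_norm, inv_mul_cancel₀ hπ0.ne']
    set v : E := R i₀ - s • e with hv
    have hvnorm : ‖v - R i₀‖ = s := by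
      rw [hv]
      simp only [sub_sub_cancel_left, norm_neg, norm_smul, hene, mul_one,
        Real.norm_eq_abs, abs_of_pos hspos]
    have hd : ε * ‖v - R i₀‖ = δ := by
      rw [hvnorm, hε, div_mul_cancel₀ _ hspos.ne']
    have hmem : pert R i₀ v ε ∈ {P : Measure E | IsProbabilityMeasure P ∧
        transportCost (fun u w => ENNReal.ofReal ‖u - w‖) P (empirical R)
          ≤ ENNReal.ofReal δ} :=
      ⟨pert_isProb hN R i₀ v hεN, pert_transportCost hN R i₀ v hε0.le hεN hd.le⟩
    have hval : ∫ x, ⟪π, x⟫ ∂(pert R i₀ v ε) = m - δ * ‖π‖ := by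
      rw [pert_integral hN R i₀ v hε0.le hεN hinner, ← hm]
      have hiv : ⟪π, v⟫ - ⟪π, R i₀⟫ = -(s * ‖π‖) := by
        rw [hv, he]
        rw [inner_sub_right, real_inner_smul_right, real_inner_smul_right,
          real_inner_self_eq_norm_mul_norm]
        field_simp
        ring
      have hεs : ε * s = δ := div_mul_cancel₀ _ hspos.ne'
      rw [hiv, ← hεs]
      ring
    refine iInf₂_le_of_le (pert R i₀ v ε) hmem ?_
    rw [hval]
  · refine le_iInf₂ fun P hP => ?_
    obtain ⟨hPprob, hPcost⟩ := hP
    haveI := hPprob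
    rw [EReal.coe_le_coe_iff]
    refine le_of_forall_pos_sub (norm_nonneg π) fun η hη => ?_
    obtain ⟨γ, h1, h2, hc⟩ := exists_coupling hPcost ENNReal.ofReal_ne_top
      (ENNReal.ofReal_pos.2 hη) ENNReal.ofReal_ne_top
    rw [← ENNReal.ofReal_add hδ.le hη.le] at hc
    have := (integral_inner_ge_of_coupling π h1 h2 hQint (by positivity) hc).2
    rw [hQval] at this
    nlinarith [norm_nonneg π]

lemma lintegral_ofReal_eq {P : Measure E} {f : E → ℝ} (hfc : Continuous f)
    (hf0 : ∀ x, 0 ≤ f x) (hint : Integrable f P) :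
    ∫⁻ x, ENNReal.ofReal (f x) ∂P = ENNReal.ofReal (∫ x, f x ∂P) := by
  rw [integral_eq_lintegral_of_nonneg_ae (Filter.Eventually.of_forall hf0)
    hfc.aestronglyMeasurable, ENNReal.ofReal_toReal]
  have := hint.2
  simp only [HasFiniteIntegral] at this
  refine ne_of_lt (lt_of_le_of_lt (le_of_eq ?_) this)
  refine lintegral_congr fun x => ?_
  rw [← Real.enorm_eq_ofReal (hf0 x)]

lemma coe_ennreal_fin {L : ℝ≥0∞} (h : L ≠ ⊤) : (L : EReal) = ((L.toReal : ℝ) : EReal) := by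
  conv_lhs => rw [← ENNReal.ofReal_toReal h]
  rw [EReal.coe_ennreal_ofReal, max_eq_left ENNReal.toReal_nonneg]

/-- value of the worst-case CVaR objective over the Wasserstein ball -/
lemma lemB (hN : 0 < N) (R : Fin N → E) {δ : ℝ} (hδ : 0 < δ) {π : E} (hπ : π ≠ 0)
    (a : ℝ) {α : ℝ} (hα : 0 < α) :
    ⨆ P ∈ {P : Measure E | IsProbabilityMeasure P ∧
        transportCost (fun u w => ENNReal.ofReal ‖u - w‖) P (empirical R)
          ≤ ENNReal.ofReal δ},
      (((a : ℝ) : EReal) + ((α⁻¹ : ℝ) : EReal) *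
        ((∫⁻ x, ENNReal.ofReal (max (-⟪π, x⟫ - a) 0) ∂P : ℝ≥0∞) : EReal))
    = (((a + α⁻¹ * ((N : ℝ)⁻¹ * (∑ i, max (-⟪π, R i⟫ - a) 0) + δ * ‖π‖) : ℝ)) : EReal) := by
  have hπ0 : (0:ℝ) < ‖π‖ := norm_pos_iff.2 hπ
  have hα0 : (0:ℝ) < α⁻¹ := by positivity
  set f : E → ℝ := fun x => max (-⟪π, x⟫ - a) 0 with hf
  have hinner : Continuous fun x : E => ⟪π, x⟫ := continuous_const.inner continuous_id
  have hfc : Continuous f := ((hinner.neg.sub continuous_const).max continuous_const)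
  have hf0 : ∀ x, 0 ≤ f x := fun x => le_max_right _ _
  have hlip : ∀ x y : E, f x ≤ f y + ‖π‖ * ‖x - y‖ := by
    intro x y
    have hx : -⟪π, x⟫ - a = (-⟪π, y⟫ - a) + ⟪π, y - x⟫ := by
      rw [inner_sub_right]; ring
    have h1 : ⟪π, y - x⟫ ≤ ‖π‖ * ‖y - x‖ := real_inner_le_norm _ _
    have h2 : ‖y - x‖ = ‖x - y‖ := norm_sub_rev _ _
    refine max_le ?_ (by positivity)
    have : -⟪π, y⟫ - a ≤ f y := le_max_left _ _
    rw [hx]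
    rw [h2] at h1
    linarith
  set S : ℝ := (N : ℝ)⁻¹ * (∑ i, f (R i)) with hS
  have hS0 : 0 ≤ S := by
    refine mul_nonneg (by positivity) (Finset.sum_nonneg fun i _ => hf0 _)
  set T : ℝ := a + α⁻¹ * (S + δ * ‖π‖) with hT
  have hQl : ∫⁻ x, ENNReal.ofReal (f x) ∂(empirical R) = ENNReal.ofReal S := by
    rw [lintegral_empirical, hS, ENNReal.ofReal_mul (by positivity),
      ENNReal.ofReal_sum_of_nonneg (fun i _ => hf0 _),
      ENNReal.ofReal_inv_of_pos (by exact_mod_cast hN), ENNReal.ofReal_natCast]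
  -- upper bound for all P in the ball
  have keyUB : ∀ P : Measure E, IsProbabilityMeasure P →
      transportCost (fun u w => ENNReal.ofReal ‖u - w‖) P (empirical R) ≤ ENNReal.ofReal δ →
      ∫⁻ x, ENNReal.ofReal (f x) ∂P ≤ ENNReal.ofReal (S + δ * ‖π‖) := by
    intro P hPprob hPcost
    have hstep : ∀ η : ℝ, 0 < η →
        ∫⁻ x, ENNReal.ofReal (f x) ∂P ≤ ENNReal.ofReal (S + δ * ‖π‖ + ‖π‖ * η) := by
      intro η hη
      obtain ⟨γ, h1, h2, hc⟩ := exists_coupling hPcost ENNReal.ofReal_ne_top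
        (ENNReal.ofReal_pos.2 hη) ENNReal.ofReal_ne_top
      refine le_trans (lintegral_le_of_coupling hfc (norm_nonneg π) hlip h1 h2) ?_
      rw [hQl]
      calc ENNReal.ofReal S + ENNReal.ofReal ‖π‖ * ∫⁻ p, ENNReal.ofReal ‖p.1 - p.2‖ ∂γ
          ≤ ENNReal.ofReal S + ENNReal.ofReal ‖π‖ *
            (ENNReal.ofReal δ + ENNReal.ofReal η) := by
            exact add_le_add_right (mul_le_mul_right hc _) _
        _ = ENNReal.ofReal (S + δ * ‖π‖ + ‖π‖ * η) := by
            rw [← ENNReal.ofReal_add hδ.le hη.le, ← ENNReal.ofReal_mul (norm_nonneg π),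
              ← ENNReal.ofReal_add hS0 (by positivity)]
            ring_nf
    have hne : ∫⁻ x, ENNReal.ofReal (f x) ∂P ≠ ⊤ :=
      ne_of_lt (lt_of_le_of_lt (hstep 1 one_pos) ENNReal.ofReal_lt_top)
    rw [← ENNReal.ofReal_toReal hne]
    refine ENNReal.ofReal_le_ofReal ?_
    refine le_of_forall_pos_sub (norm_nonneg π) fun η hη => ?_
    have := ENNReal.toReal_le_of_le_ofReal (by positivity) (hstep η hη)
    linarith
  apply le_antisymm
  · refine iSup₂_le fun P hP => ?_
    obtain ⟨hPprob, hPcost⟩ := hP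
    have hub := keyUB P hPprob hPcost
    have hne : ∫⁻ x, ENNReal.ofReal (f x) ∂P ≠ ⊤ :=
      ne_of_lt (lt_of_le_of_lt hub ENNReal.ofReal_lt_top)
    rw [coe_ennreal_fin hne, ← EReal.coe_mul, ← EReal.coe_add, EReal.coe_le_coe_iff, hT]
    have htb : (∫⁻ x, ENNReal.ofReal (f x) ∂P).toReal ≤ S + δ * ‖π‖ :=
      ENNReal.toReal_le_of_le_ofReal (by positivity) hub
    have h6 := mul_le_mul_of_nonneg_left htb hα0.le
    linarith
  · refine le_of_forall_lt fun c hc => ?_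
    obtain ⟨r, hcr, hrT⟩ := EReal.lt_iff_exists_real_btwn.1 hc
    rw [EReal.coe_lt_coe_iff] at hrT
    set i₀ : Fin N := ⟨0, hN⟩
    set B : ℝ := |(-⟪π, R i₀⟫ - a) - f (R i₀)| with hB
    have hB0 : 0 ≤ B := abs_nonneg _
    set η : ℝ := T - r with hη
    have hηpos : 0 < η := by rw [hη]; linarith
    set s : ℝ := (N * δ + 1) + (α⁻¹ * δ * B) / η + 1 with hs
    have hspos : 0 < s := by positivity
    have hsbig : (α⁻¹ * δ * B) / η < s := by
      rw [hs]
      have : (0:ℝ) < N * δ + 1 := by positivity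
      linarith
    set ε : ℝ := δ / s with hε
    have hε0 : 0 < ε := div_pos hδ hspos
    have hεN : ε ≤ (N:ℝ)⁻¹ := by
      rw [hε, div_le_iff₀ hspos]
      have hNpos : (0:ℝ) < N := by exact_mod_cast hN
      rw [inv_mul_eq_div, le_div_iff₀ hNpos]
      have h1 : (0:ℝ) ≤ α⁻¹ * δ * B / η := by positivity
      calc δ * (N:ℝ) = (N:ℝ) * δ := mul_comm _ _
        _ ≤ (N:ℝ) * δ + 1 + α⁻¹ * δ * B / η + 1 := by linarith
        _ = s := hs.symm
    set e : E := ‖π‖⁻¹ • π with he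
    have hene : ‖e‖ = 1 := by
      rw [he, norm_smul, norm_inv, norm_norm, inv_mul_cancel₀ hπ0.ne']
    set v : E := R i₀ - s • e with hv
    have hvnorm : ‖v - R i₀‖ = s := by
      rw [hv]
      simp only [sub_sub_cancel_left, norm_neg, norm_smul, hene, mul_one,
        Real.norm_eq_abs, abs_of_pos hspos]
    have hd : ε * ‖v - R i₀‖ = δ := by
      rw [hvnorm, hε, div_mul_cancel₀ _ hspos.ne']
    have hεs : ε * s = δ := by rw [hε, div_mul_cancel₀ _ hspos.ne']
    have hmem : pert R i₀ v ε ∈ {P : Measure E | IsProbabilityMeasure P ∧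
        transportCost (fun u w => ENNReal.ofReal ‖u - w‖) P (empirical R)
          ≤ ENNReal.ofReal δ} :=
      ⟨pert_isProb hN R i₀ v hεN, pert_transportCost hN R i₀ v hε0.le hεN hd.le⟩
    set P := pert R i₀ v ε with hP
    have hPint : Integrable f P := pert_integrable hfc hN R i₀ v ε
    have hval : ∫ x, f x ∂P = S + ε * (f v - f (R i₀)) := by
      rw [hP, pert_integral hN R i₀ v hε0.le hεN hfc, hS]
    have hfv : -⟪π, R i₀⟫ + s * ‖π‖ - a ≤ f v := by
      have hiv : ⟪π, v⟫ = ⟪π, R i₀⟫ - s * ‖π‖ := by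
        rw [hv, he, inner_sub_right, real_inner_smul_right, real_inner_smul_right,
          real_inner_self_eq_norm_mul_norm]
        field_simp
      have h6 : -⟪π, R i₀⟫ + s * ‖π‖ - a = -⟪π, v⟫ - a := by rw [hiv]; ring
      have h7 : -⟪π, v⟫ - a ≤ f v := le_max_left _ _
      linarith
    have hlow : T - α⁻¹ * (ε * B) ≤ a + α⁻¹ * (∫ x, f x ∂P) := by
      rw [hval, hT]
      have h1 : ε * (f v - f (R i₀)) ≥ δ * ‖π‖ - ε * B := by
        have h2 : f v - f (R i₀) ≥ s * ‖π‖ + ((-⟪π, R i₀⟫ - a) - f (R i₀)) := by linarith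
        have h3 : ((-⟪π, R i₀⟫ - a) - f (R i₀)) ≥ -B := neg_abs_le _
        have h23 : s * ‖π‖ - B ≤ f v - f (R i₀) := by linarith
        have h4 := mul_le_mul_of_nonneg_left h23 hε0.le
        have h5 : ε * (s * ‖π‖ - B) = δ * ‖π‖ - ε * B := by
          rw [mul_sub, ← mul_assoc, hεs]
        linarith
      have h6 := mul_le_mul_of_nonneg_left h1 hα0.le
      have h7 : α⁻¹ * (δ * ‖π‖ - ε * B) = α⁻¹ * (δ * ‖π‖) - α⁻¹ * (ε * B) := by ring
      have h8 : α⁻¹ * (S + δ * ‖π‖) = α⁻¹ * S + α⁻¹ * (δ * ‖π‖) := by ring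
      have h9 : α⁻¹ * (S + ε * (f v - f (R i₀)))
          = α⁻¹ * S + α⁻¹ * (ε * (f v - f (R i₀))) := by ring
      linarith
    have hsmall : α⁻¹ * (ε * B) < η := by
      have heq : α⁻¹ * (ε * B) = (α⁻¹ * δ * B) / s := by
        rw [hε]; ring
      have h5 : α⁻¹ * δ * B < s * η := by
        have h6 := (div_lt_iff₀ hηpos).1 hsbig
        linarith
      rw [heq, div_lt_iff₀ hspos]
      linarith
    -- conclude
    have hlint : ∫⁻ x, ENNReal.ofReal (f x) ∂P = ENNReal.ofReal (∫ x, f x ∂P) :=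
      lintegral_ofReal_eq hfc hf0 hPint
    have hint0 : 0 ≤ ∫ x, f x ∂P := integral_nonneg hf0
    refine lt_of_lt_of_le hcr (le_trans ?_ (le_iSup₂ (f := fun P _ =>
      ((a : ℝ) : EReal) + ((α⁻¹ : ℝ) : EReal) *
        ((∫⁻ x, ENNReal.ofReal (max (-⟪π, x⟫ - a) 0) ∂P : ℝ≥0∞) : EReal)) P hmem))
    have hbody : ((a : ℝ) : EReal) + ((α⁻¹ : ℝ) : EReal) *
        ((∫⁻ x, ENNReal.ofReal (max (-⟪π, x⟫ - a) 0) ∂P : ℝ≥0∞) : EReal)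
        = (((a + α⁻¹ * (∫ x, f x ∂P)) : ℝ) : EReal) := by
      have : (fun x : E => ENNReal.ofReal (max (-⟪π, x⟫ - a) 0))
          = fun x => ENNReal.ofReal (f x) := rfl
      rw [this, hlint, EReal.coe_ennreal_ofReal, max_eq_left hint0,
        ← EReal.coe_mul, ← EReal.coe_add]
    rw [hbody, EReal.coe_le_coe_iff]
    clear_value B η s ε S T
    linarith

end Bochner

theorem robust_meanCVaR_dual_k1 (n N : ℕ) (hN : 0 < N)
    (R : Fin N → EuclideanSpace ℝ (Fin n))
    (α δ ρ : ℝ) (hα : α ∈ Set.Ioo (0:ℝ) 1) (hδ : 0 < δ)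
    -- the ambiguity set `U_δ(Q)`
    (U : Set (Measure (EuclideanSpace ℝ (Fin n))))
    (hU : U = {P | IsProbabilityMeasure P ∧
        transportCost (fun u w => ENNReal.ofReal ‖u - w‖) P (empirical R)
          ≤ ENNReal.ofReal δ}) :
    -- primal robust mean-CVaR value
    (⨅ (π : EuclideanSpace ℝ (Fin n)) (a : ℝ)
        (_ : (ρ : EReal) ≤ ⨅ P ∈ U, ((∫ x, ⟪π, x⟫ ∂P : ℝ) : EReal))
        (_ : ⟪π, (WithLp.toLp 2 (fun _ => (1:ℝ)) : EuclideanSpace ℝ (Fin n))⟫ = 1),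
        ⨆ P ∈ U,
          ((a : ℝ) : EReal) +
            ((α⁻¹ : ℝ) : EReal) *
              ((∫⁻ x, ENNReal.ofReal (max (-⟪π, x⟫ - a) 0) ∂P : ℝ≥0∞) : EReal)) =
    -- dual finite-dimensional value
    (⨅ (π : EuclideanSpace ℝ (Fin n)) (a : ℝ)
        (_ : ρ ≤ (N : ℝ)⁻¹ * ∑ i : Fin N, ⟪π, R i⟫ - δ * ‖π‖)
        (_ : ⟪π, (WithLp.toLp 2 (fun _ => (1:ℝ)) : EuclideanSpace ℝ (Fin n))⟫ = 1),
        ((a + α⁻¹ * ((N : ℝ)⁻¹ * (∑ i : Fin N, max (-⟪π, R i⟫ - a) 0) + δ * ‖π‖) : ℝ)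
          : EReal)) := by
  subst hU
  refine iInf_congr fun π => iInf_congr fun a => ?_
  by_cases h2 : ⟪π, (WithLp.toLp 2 (fun _ => (1:ℝ)) : EuclideanSpace ℝ (Fin n))⟫ = 1
  · have hπ : π ≠ 0 := by
      intro h
      rw [h] at h2
      simp at h2
    have hA := lemA hN R hδ hπ
    have hB := lemB hN R hδ hπ a hα.1
    rw [hA, hB]
    simp only [EReal.coe_le_coe_iff]
  · simp only [iInf_neg h2]
    simp
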